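/- arXiv:1912.00406 — 4 statements merged into one kernel-verified Lean document; each statement's English description precedes it below -/
import Mathlib

section
/- For a > 0, μ > 0 and integer p ≥ 1, ∫_0^∞ ln(1 + a x) e^{-μ x} x^{p-1} dx = (p-1)! · e^{μ/a} · μ^{-p} · ∑_{q=1}^{p} E_q(μ/a), where E_q is the generalized exponential integral. -/
open Real MeasureTheory Set Filter Topology

-- Gamma-type integrability
lemma intOn_pow_exp {μ : ℝ} (hμ : 0 < μ) (k : ℕ) :
    IntegrableOn (fun x : ℝ => x ^ k * Real.exp (-μ * x)) (Ioi 0) := by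
  apply integrable_of_isBigO_exp_neg (half_pos hμ) (by fun_prop)
  have h : Filter.Tendsto (fun x : ℝ => x ^ k * Real.exp (-(μ/2) * x)) atTop (nhds 0) := by
    have := (tendsto_pow_mul_exp_neg_atTop_nhds_zero k).comp
      (tendsto_id.const_mul_atTop (half_pos hμ))
    have heq : (fun x : ℝ => x ^ k * Real.exp (-(μ/2) * x)) =
        fun x : ℝ => ((μ/2 * x) ^ k * Real.exp (-(μ/2 * x))) / (μ/2) ^ k := by
      funext x
      field_simp [mul_pow]
      ring
    rw [heq]
    simpa using this.div_const ((μ/2) ^ k)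
  calc (fun x : ℝ => x ^ k * Real.exp (-μ * x))
      = fun x : ℝ => (x ^ k * Real.exp (-(μ/2) * x)) * Real.exp (-(μ/2) * x) := by
        funext x; rw [mul_assoc, ← Real.exp_add]; ring_nf
    _ =O[atTop] fun x : ℝ => 1 * Real.exp (-(μ/2) * x) :=
        (h.isBigO_one ℝ).mul (Asymptotics.isBigO_refl _ _)
    _ = fun x : ℝ => Real.exp (-(μ/2) * x) := by funext x; ring

lemma val_pow_exp {μ : ℝ} (hμ : 0 < μ) (k : ℕ) :
    ∫ x in Ioi (0:ℝ), x ^ k * Real.exp (-μ * x) = k.factorial / μ ^ (k + 1) := by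
  have h := integral_rpow_mul_exp_neg_mul_Ioi (a := (k:ℝ) + 1) (r := μ) (by positivity) hμ
  have hl : ∫ x in Ioi (0:ℝ), x ^ k * Real.exp (-μ * x)
      = ∫ t in Ioi (0:ℝ), t ^ ((k:ℝ) + 1 - 1) * Real.exp (-(μ * t)) := by
    refine setIntegral_congr_fun measurableSet_Ioi (fun x hx => ?_)
    rw [add_sub_cancel_right, Real.rpow_natCast, neg_mul]
  rw [hl, h]
  rw [show ((k:ℝ) + 1) = ((k+1 : ℕ) : ℝ) by push_cast; ring, Real.rpow_natCast]
  rw [show (((k+1:ℕ)) : ℝ) = (k:ℝ) + 1 by push_cast; ring, Real.Gamma_nat_eq_factorial]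
  field_simp
  rw [← mul_pow, one_div_mul_cancel hμ.ne', one_pow]

/-- The generalized exponential integral `E_q(x) = ∫_1^∞ e^{-xt}/t^q dt`. -/
noncomputable def genExpInt (q : ℕ) (x : ℝ) : ℝ :=
  ∫ t in Set.Ioi (1:ℝ), Real.exp (-x * t) / t ^ q

-- integrability of the E_q integrand
lemma intOn_genExpInt {y : ℝ} (hy : 0 < y) (q : ℕ) :
    IntegrableOn (fun t : ℝ => Real.exp (-y * t) / t ^ q) (Ioi 1) := by
  refine Integrable.mono (exp_neg_integrableOn_Ioi 1 hy) ?_ ?_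
  · refine (ContinuousOn.aestronglyMeasurable ?_ measurableSet_Ioi)
    refine ContinuousOn.div (by fun_prop) (by fun_prop) (fun t ht => ?_)
    have : (0:ℝ) < t := lt_trans one_pos ht
    positivity
  · filter_upwards [ae_restrict_mem measurableSet_Ioi] with t ht
    have h1 : (0:ℝ) < t := lt_trans one_pos ht
    have h2 : (1:ℝ) ≤ t ^ q := one_le_pow₀ (le_of_lt ht)
    simp only [Real.norm_eq_abs]
    rw [abs_div, abs_of_nonneg (Real.exp_pos _).le, abs_of_nonneg (by positivity : (0:ℝ) ≤ t ^ q)]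
    exact div_le_self (Real.exp_pos _).le h2

-- integrability of frac
lemma intOn_pow_exp_frac {a μ : ℝ} (ha : 0 < a) (hμ : 0 < μ) (k : ℕ) :
    IntegrableOn (fun x : ℝ => x ^ k * Real.exp (-μ * x) / (1 + a * x)) (Ioi 0) := by
  refine Integrable.mono (intOn_pow_exp hμ k) ?_ ?_
  · refine (ContinuousOn.aestronglyMeasurable ?_ measurableSet_Ioi)
    refine ContinuousOn.div (by fun_prop) (by fun_prop) (fun x hx => ?_)
    have : (0:ℝ) < x := hx
    positivity
  · filter_upwards [ae_restrict_mem measurableSet_Ioi] with x hx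
    have h1 : (0:ℝ) < x := hx
    have h2 : (1:ℝ) ≤ 1 + a * x := by nlinarith
    simp only [Real.norm_eq_abs]
    rw [abs_div, abs_of_nonneg (by positivity : (0:ℝ) ≤ x ^ k * Real.exp (-μ * x)),
      abs_of_nonneg (by positivity : (0:ℝ) ≤ 1 + a * x)]
    exact div_le_self (by positivity) h2

-- log bound on Ioi 0
lemma log_bound {a x : ℝ} (ha : 0 < a) (hx : 0 ≤ x) :
    0 ≤ Real.log (1 + a * x) ∧ Real.log (1 + a * x) ≤ a * x := by
  constructor
  · apply Real.log_nonneg; nlinarith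
  · have := Real.log_le_sub_one_of_pos (x := 1 + a * x) (by nlinarith)
    linarith

-- integrability of log term
lemma intOn_log_pow_exp {a μ : ℝ} (ha : 0 < a) (hμ : 0 < μ) (k : ℕ) :
    IntegrableOn (fun x : ℝ => Real.log (1 + a * x) * Real.exp (-μ * x) * x ^ k) (Ioi 0) := by
  refine Integrable.mono ((intOn_pow_exp hμ (k+1)).const_mul a) ?_ ?_
  · refine (ContinuousOn.aestronglyMeasurable ?_ measurableSet_Ioi)
    refine ContinuousOn.mul (ContinuousOn.mul (ContinuousOn.log (by fun_prop)
      (fun x hx => by have : (0:ℝ) < x := hx; positivity)) (by fun_prop)) (by fun_prop)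
  · filter_upwards [ae_restrict_mem measurableSet_Ioi] with x hx
    have h1 : (0:ℝ) < x := hx
    obtain ⟨hl0, hl1⟩ := log_bound ha h1.le
    simp only [Real.norm_eq_abs]
    rw [abs_of_nonneg (by positivity), abs_of_nonneg (by positivity : (0:ℝ) ≤ a * (x ^ (k+1) * Real.exp (-μ * x)))]
    calc Real.log (1 + a * x) * Real.exp (-μ * x) * x ^ k
        ≤ (a * x) * Real.exp (-μ * x) * x ^ k := by
          apply mul_le_mul_of_nonneg_right (mul_le_mul_of_nonneg_right hl1 (Real.exp_pos _).le)
          positivity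
      _ = a * (x ^ (k+1) * Real.exp (-μ * x)) := by ring

lemma tendsto_exp_neg_mul {y : ℝ} (hy : 0 < y) :
    Tendsto (fun t : ℝ => Real.exp (-y * t)) atTop (𝓝 0) :=
  Real.tendsto_exp_atBot.comp (tendsto_id.const_mul_atTop_of_neg (neg_neg_iff_pos.2 hy))

lemma tendsto_exp_div_pow {y : ℝ} (hy : 0 < y) (q : ℕ) :
    Tendsto (fun t : ℝ => Real.exp (-y * t) / t ^ q) atTop (𝓝 0) := by
  apply squeeze_zero'
  · filter_upwards [eventually_gt_atTop (0:ℝ)] with t ht; positivity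
  · filter_upwards [eventually_ge_atTop (1:ℝ)] with t ht
    exact div_le_self (Real.exp_pos _).le (one_le_pow₀ ht)
  · exact tendsto_exp_neg_mul hy

lemma genExpInt_rec {y : ℝ} (hy : 0 < y) (q : ℕ) :
    y * genExpInt q y + q * genExpInt (q+1) y = Real.exp (-y) := by
  have key : ∫ t in Ioi (1:ℝ),
      (y * (Real.exp (-y * t) / t ^ q) + q * (Real.exp (-y * t) / t ^ (q+1)))
      = 0 - (-(Real.exp (-y * 1) / (1:ℝ) ^ q)) := by
    apply integral_Ioi_of_hasDerivAt_of_tendsto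
      (f := fun t : ℝ => -(Real.exp (-y * t) / t ^ q))
      (f' := fun t : ℝ => y * (Real.exp (-y * t) / t ^ q) + q * (Real.exp (-y * t) / t ^ (q+1)))
    · apply ContinuousWithinAt.neg
      exact ContinuousWithinAt.div
        ((Real.continuous_exp.comp (continuous_const.mul continuous_id)).continuousWithinAt)
        ((continuous_pow q).continuousWithinAt) (by norm_num)
    · intro t ht
      have ht0 : (0:ℝ) < t := lt_trans one_pos ht
      have h1 : HasDerivAt (fun t : ℝ => Real.exp (-y * t)) (Real.exp (-y * t) * (-y)) t := by
        simpa using (((hasDerivAt_id t).const_mul (-y)).exp)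
      have h2 : HasDerivAt (fun t : ℝ => t ^ q) ((q:ℝ) * t ^ (q-1)) t := by
        simpa using hasDerivAt_pow q t
      have := (h1.div h2 (by positivity)).neg
      convert this using 1
      · rfl
      rcases Nat.eq_zero_or_pos q with hq | hq
      · subst hq; simp; ring
      · obtain ⟨m, rfl⟩ : ∃ m, q = m + 1 := ⟨q - 1, (Nat.succ_pred_eq_of_pos hq).symm⟩
        simp only [Nat.add_sub_cancel]
        field_simp
        ring
    · exact ((intOn_genExpInt hy q).const_mul y).add ((intOn_genExpInt hy (q+1)).const_mul q)
    · simpa using (tendsto_exp_div_pow hy q).neg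
  rw [integral_add ((intOn_genExpInt hy q).const_mul y) ((intOn_genExpInt hy (q+1)).const_mul q),
    integral_const_mul, integral_const_mul] at key
  simpa [genExpInt] using key

lemma shift_Ioi (g : ℝ → ℝ) : ∫ s in Ioi (0:ℝ), g (s + 1) = ∫ t in Ioi (1:ℝ), g t := by
  have := (measurePreserving_add_right (volume : Measure ℝ) 1).setIntegral_preimage_emb
    (measurableEmbedding_addRight 1) g (Ioi 1)
  simpa using this

lemma J_formula {a μ : ℝ} (ha : 0 < a) (hμ : 0 < μ) (k : ℕ) :
    ∫ x in Ioi (0:ℝ), x ^ k * Real.exp (-μ * x) / (1 + a * x)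
      = k.factorial / (a * μ ^ k) * Real.exp (μ/a) * genExpInt (k+1) (μ/a) := by
  have hy : 0 < μ / a := div_pos hμ ha
  induction k with
  | zero =>
      have h1 : genExpInt 1 (μ/a) = ∫ t in Ioi (1:ℝ), Real.exp (-(μ/a) * t) / t := by
        simp [genExpInt]
      have h2 : (∫ t in Ioi (1:ℝ), Real.exp (-(μ/a) * t) / t)
          = ∫ s in Ioi (0:ℝ), Real.exp (-(μ/a) * (s + 1)) / (s + 1) := by
        rw [shift_Ioi (fun t => Real.exp (-(μ/a) * t) / t)]
      have h3 : (∫ s in Ioi (0:ℝ), Real.exp (-(μ/a) * (s + 1)) / (s + 1))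
          = a • ∫ x in Ioi (0:ℝ), Real.exp (-(μ/a) * (a * x + 1)) / (a * x + 1) := by
        have := integral_comp_mul_left_Ioi
          (fun s => Real.exp (-(μ/a) * (s + 1)) / (s + 1)) 0 ha
        simp only [mul_zero] at this
        rw [this, smul_smul, mul_inv_cancel₀ ha.ne', one_smul]
      have h4 : (∫ x in Ioi (0:ℝ), Real.exp (-(μ/a) * (a * x + 1)) / (a * x + 1))
          = Real.exp (-(μ/a)) * ∫ x in Ioi (0:ℝ), Real.exp (-μ * x) / (1 + a * x) := by
        rw [← integral_const_mul]
        refine setIntegral_congr_fun measurableSet_Ioi (fun x hx => ?_)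
        have : -(μ/a) * (a * x + 1) = -(μ/a) + -μ * x := by field_simp; ring
        rw [this, Real.exp_add, add_comm (1:ℝ) (a*x)]
        ring
      have hne : Real.exp (-(μ/a)) ≠ 0 := (Real.exp_pos _).ne'
      have hG : genExpInt 1 (μ/a) = a * (Real.exp (-(μ/a)) *
          ∫ x in Ioi (0:ℝ), Real.exp (-μ * x) / (1 + a * x)) := by
        rw [h1, h2, h3, h4, smul_eq_mul]
      set I := ∫ x in Ioi (0:ℝ), Real.exp (-μ * x) / (1 + a * x) with hI
      simp only [pow_zero, one_mul, Nat.factorial_zero, Nat.cast_one, mul_one]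
      rw [show (∫ x in Ioi (0:ℝ), Real.exp (-μ * x) / (1 + a * x)) = I from rfl, hG]
      have hexp : Real.exp (μ/a) * Real.exp (-(μ/a)) = 1 := by rw [← Real.exp_add]; simp
      have hexp2 : Real.exp (μ/a) * Real.exp (-μ/a) = 1 := by rw [← Real.exp_add, show μ/a + -μ/a = 0 by ring, Real.exp_zero]
      field_simp
      linear_combination (-I) * hexp
  | succ k ih =>
      have key : ∀ x ∈ Ioi (0:ℝ), x ^ (k+1) * Real.exp (-μ * x) / (1 + a * x)
          = a⁻¹ * (x ^ k * Real.exp (-μ * x)) - a⁻¹ * (x ^ k * Real.exp (-μ * x) / (1 + a * x)) := by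
        intro x hx
        have hx0 : (0:ℝ) < x := hx
        have h2 : (0:ℝ) < 1 + a * x := by nlinarith
        field_simp
        ring
      rw [setIntegral_congr_fun measurableSet_Ioi key,
        integral_sub ((intOn_pow_exp hμ k).const_mul _) ((intOn_pow_exp_frac ha hμ k).const_mul _),
        integral_const_mul, integral_const_mul, val_pow_exp hμ k, ih]
      have hrec := genExpInt_rec hy (k+1)
      have hEk2 : genExpInt (k+2) (μ/a)
          = (Real.exp (-(μ/a)) - (μ/a) * genExpInt (k+1) (μ/a)) / (k+1) := by
        field_simp at hrec ⊢
        push_cast at hrec ⊢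
        linarith
      rw [show k+1+1 = k+2 from rfl, hEk2, Real.exp_neg]
      have h1 : Real.exp (μ/a) ≠ 0 := (Real.exp_pos _).ne'
      rw [Nat.factorial_succ]
      field_simp
      push_cast
      ring

lemma tendsto_pow_exp {μ : ℝ} (hμ : 0 < μ) (k : ℕ) :
    Tendsto (fun x : ℝ => x ^ k * Real.exp (-μ * x)) atTop (𝓝 0) := by
  have := (tendsto_pow_mul_exp_neg_atTop_nhds_zero k).comp
    (tendsto_id.const_mul_atTop hμ)
  have heq : (fun x : ℝ => x ^ k * Real.exp (-μ * x)) =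
      fun x : ℝ => ((μ * x) ^ k * Real.exp (-(μ * x))) / μ ^ k := by
    funext x
    field_simp [mul_pow]
    ring
  rw [heq]
  simpa using this.div_const (μ ^ k)

lemma tendsto_log_pow_exp {a μ : ℝ} (ha : 0 < a) (hμ : 0 < μ) (m : ℕ) :
    Tendsto (fun x : ℝ => Real.log (1 + a * x) * (x ^ m * Real.exp (-μ * x))) atTop (𝓝 0) := by
  apply squeeze_zero'
  · filter_upwards [eventually_gt_atTop (0:ℝ)] with x hx
    have := (log_bound ha hx.le).1
    positivity
  · filter_upwards [eventually_gt_atTop (0:ℝ)] with x hx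
    have hb := (log_bound ha hx.le).2
    calc Real.log (1 + a * x) * (x ^ m * Real.exp (-μ * x))
        ≤ (a * x) * (x ^ m * Real.exp (-μ * x)) := by
          apply mul_le_mul_of_nonneg_right hb; positivity
      _ = a * (x ^ (m+1) * Real.exp (-μ * x)) := by ring
  · simpa using (tendsto_pow_exp hμ (m+1)).const_mul a

lemma K_ibp {a μ : ℝ} (ha : 0 < a) (hμ : 0 < μ) (m : ℕ) :
    μ * ∫ x in Ioi (0:ℝ), Real.log (1 + a * x) * Real.exp (-μ * x) * x ^ m
      = (m:ℝ) * (∫ x in Ioi (0:ℝ), Real.log (1 + a * x) * Real.exp (-μ * x) * x ^ (m-1))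
        + a * ∫ x in Ioi (0:ℝ), x ^ m * Real.exp (-μ * x) / (1 + a * x) := by
  have key : ∫ x in Ioi (0:ℝ),
      (a * (x ^ m * Real.exp (-μ * x) / (1 + a * x))
        + ((m:ℝ) * (Real.log (1 + a * x) * Real.exp (-μ * x) * x ^ (m-1))
          - μ * (Real.log (1 + a * x) * Real.exp (-μ * x) * x ^ m)))
      = 0 - Real.log (1 + a * 0) * ((0:ℝ) ^ m * Real.exp (-μ * 0)) := by
    apply integral_Ioi_of_hasDerivAt_of_tendsto
      (f := fun x : ℝ => Real.log (1 + a * x) * (x ^ m * Real.exp (-μ * x)))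
    · apply ContinuousAt.continuousWithinAt
      have h1 : ContinuousAt (fun x : ℝ => Real.log (1 + a * x)) 0 := by
        apply (Real.continuousAt_log (by norm_num)).comp
        fun_prop
      exact h1.mul (by fun_prop)
    · intro x hx
      have hx0 : (0:ℝ) < x := hx
      have h2 : (0:ℝ) < 1 + a * x := by nlinarith
      have hlog : HasDerivAt (fun x : ℝ => Real.log (1 + a * x)) (a / (1 + a * x)) x := by
        have := (((hasDerivAt_id x).const_mul a).const_add 1).log h2.ne'
        simpa using this
      have hexp : HasDerivAt (fun x : ℝ => Real.exp (-μ * x)) (Real.exp (-μ * x) * (-μ)) x := by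
        simpa using ((hasDerivAt_id x).const_mul (-μ)).exp
      have hpow : HasDerivAt (fun x : ℝ => x ^ m) ((m:ℝ) * x ^ (m-1)) x := by
        simpa using hasDerivAt_pow m x
      have := hlog.mul (hpow.mul hexp)
      convert this using 1
      · rfl
      · rfl
      simp only [Pi.mul_apply]
      push_cast
      ring
    · exact ((intOn_pow_exp_frac ha hμ m).const_mul a).add
        (((intOn_log_pow_exp ha hμ (m-1)).const_mul m).sub
          ((intOn_log_pow_exp ha hμ m).const_mul μ))
    · exact tendsto_log_pow_exp ha hμ m
  have I2 : IntegrableOn (fun x : ℝ =>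
      (m:ℝ) * (Real.log (1 + a * x) * Real.exp (-μ * x) * x ^ (m-1))
      - μ * (Real.log (1 + a * x) * Real.exp (-μ * x) * x ^ m)) (Ioi 0) := by
    exact ((intOn_log_pow_exp ha hμ (m-1)).const_mul m).sub
      ((intOn_log_pow_exp ha hμ m).const_mul μ)
  rw [integral_add ((intOn_pow_exp_frac ha hμ m).const_mul a) I2,
    integral_sub ((intOn_log_pow_exp ha hμ (m-1)).const_mul m)
      ((intOn_log_pow_exp ha hμ m).const_mul μ),
    integral_const_mul, integral_const_mul, integral_const_mul] at key
  simp only [mul_zero, add_zero, Real.log_one, zero_mul, sub_zero, zero_sub, mul_one] at key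
  linarith [key]

lemma K_formula {a μ : ℝ} (ha : 0 < a) (hμ : 0 < μ) (k : ℕ) :
    ∫ x in Ioi (0:ℝ), Real.log (1 + a * x) * Real.exp (-μ * x) * x ^ k
      = k.factorial * Real.exp (μ/a) / μ ^ (k+1)
        * ∑ q ∈ Finset.Icc 1 (k+1), genExpInt q (μ/a) := by
  induction k with
  | zero =>
      have h := K_ibp ha hμ 0
      rw [J_formula ha hμ 0] at h
      simp only [Nat.cast_zero, zero_mul, zero_add] at h
      rw [Finset.Icc_self, Finset.sum_singleton]
      refine mul_left_cancel₀ hμ.ne' ?_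
      rw [h]
      simp only [Nat.factorial_zero, pow_zero, Nat.cast_one]
      field_simp
      ring
  | succ k ih =>
      have h := K_ibp ha hμ (k+1)
      simp only [Nat.add_sub_cancel] at h
      rw [ih, J_formula ha hμ (k+1)] at h
      rw [Finset.sum_Icc_succ_top (by omega : 1 ≤ k+1+1)]
      refine mul_left_cancel₀ hμ.ne' ?_
      rw [h]
      rw [Nat.factorial_succ]
      push_cast
      field_simp
      ring

theorem stmt1 (a μ : ℝ) (ha : 0 < a) (hμ : 0 < μ) (p : ℕ) (hp : 1 ≤ p) :
    ∫ x in Set.Ioi (0:ℝ), Real.log (1 + a * x) * Real.exp (-μ * x) * x ^ (p - 1) =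
      ((p - 1).factorial : ℝ) * Real.exp (μ / a) * μ ^ (-(p : ℤ)) *
        ∑ q ∈ Finset.Icc 1 p, genExpInt q (μ / a) := by
  obtain ⟨k, rfl⟩ : ∃ k, p = k + 1 := ⟨p - 1, (Nat.succ_pred_eq_of_pos hp).symm⟩
  simp only [Nat.add_sub_cancel]
  rw [K_formula ha hμ k]
  rw [show (-(((k:ℕ)+1 : ℕ) : ℤ)) = -((k:ℤ)+1) by push_cast; ring, zpow_neg,
    show ((k:ℤ)+1) = ((k+1 : ℕ) : ℤ) by push_cast; ring, zpow_natCast]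
  field_simp
end

section
/- Let X ~ Exponential(1) (i.e., Gamma(1,1)) and Y ~ Gamma(M−1, 1) be independent, with M ≥ 2 an integer, and let μ > 0, ν > 0 with μ ≠ ν. Then the density of J = μX + νY at x > 0 equals ((-1)^{M-1} μ^{M-2}/(ν−μ)^{M-1}) e^{-x/μ} + ∑_{p=1}^{M-1} ((-μ)^{p-1} / ((M−1−p)! (ν−μ)^p ν^{M−1−p})) x^{M−1−p} e^{-x/ν}. -/
open Real MeasureTheory


lemma antideriv (a : ℝ) (ha : a ≠ 0) (n : ℕ) (x : ℝ) :
    HasDerivAt (fun y : ℝ => -(Real.exp (-(a*y)) *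
      ∑ j ∈ Finset.range (n+1), ((n.factorial : ℝ)/((n-j).factorial * a^(j+1)) * y^(n-j))))
      (x^n * Real.exp (-(a*x))) x := by
  induction n generalizing x with
  | zero =>
    simp only [zero_add, Finset.sum_range_one]
    have h1 : HasDerivAt (fun y : ℝ => Real.exp (-(a*y))) (-a * Real.exp (-(a*x))) x := by
      have := (hasDerivAt_id x).const_mul (-a)
      simpa [mul_comm] using (this.exp)
    have := (h1.mul_const ((0:ℕ).factorial / ((0:ℕ).factorial * a^1) : ℝ)).neg
    convert this using 1
    · rfl
    · rfl
    · ext y; simp only [Pi.neg_apply]; ring_nf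
    · field_simp
  | succ n ih =>
    have hsplit : ∀ y : ℝ, (∑ j ∈ Finset.range (n+1+1),
        (((n+1).factorial : ℝ)/((n+1-j).factorial * a^(j+1)) * y^(n+1-j)))
        = y^(n+1)/a + ((n:ℝ)+1)/a * ∑ j ∈ Finset.range (n+1),
            ((n.factorial : ℝ)/((n-j).factorial * a^(j+1)) * y^(n-j)) := by
      intro y
      rw [Finset.sum_range_succ', Finset.mul_sum, add_comm]
      congr 1
      · simp [Nat.factorial_succ]
        field_simp
      · apply Finset.sum_congr rfl
        intro j hj
        simp only [Nat.succ_sub_succ]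
        rw [Nat.factorial_succ]
        push_cast
        field_simp
        ring
    have key : (fun y : ℝ => -(Real.exp (-(a*y)) * ∑ j ∈ Finset.range (n+1+1),
        (((n+1).factorial : ℝ)/((n+1-j).factorial * a^(j+1)) * y^(n+1-j))))
        = fun y : ℝ => -(Real.exp (-(a*y)) * y^(n+1))/a
          + ((n:ℝ)+1)/a * (-(Real.exp (-(a*y)) * ∑ j ∈ Finset.range (n+1),
              ((n.factorial : ℝ)/((n-j).factorial * a^(j+1)) * y^(n-j)))) := by
      funext y; rw [hsplit y]; ring
    rw [key]
    have h1 : HasDerivAt (fun y : ℝ => Real.exp (-(a*y))) (-a * Real.exp (-(a*x))) x := by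
      have := (hasDerivAt_id x).const_mul (-a)
      simpa [mul_comm] using (this.exp)
    have h2 : HasDerivAt (fun y : ℝ => y^(n+1)) (((n:ℝ)+1) * x^n) x := by
      simpa using hasDerivAt_pow (n+1) x
    have h3 := ((h1.mul h2).neg.div_const a).add ((ih x).const_mul (((n:ℝ)+1)/a))
    convert h3 using 1
    · rfl
    · rfl
    · rfl
    field_simp
    ring

lemma int_eq (a : ℝ) (ha : a ≠ 0) (n : ℕ) (x : ℝ) :
    ∫ t in (0:ℝ)..x, t^n * Real.exp (-(a*t)) =
      (n.factorial : ℝ)/a^(n+1) - Real.exp (-(a*x)) *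
        ∑ j ∈ Finset.range (n+1), ((n.factorial : ℝ)/((n-j).factorial * a^(j+1)) * x^(n-j)) := by
  have hcont : Continuous fun t : ℝ => t^n * Real.exp (-(a*t)) := by continuity
  rw [intervalIntegral.integral_eq_sub_of_hasDerivAt (fun t _ => antideriv a ha n t)
    (hcont.intervalIntegrable _ _)]
  have h0 : (∑ j ∈ Finset.range (n+1), ((n.factorial : ℝ)/((n-j).factorial * a^(j+1)) * (0:ℝ)^(n-j)))
      = (n.factorial : ℝ)/a^(n+1) := by
    rw [Finset.sum_eq_single_of_mem n (Finset.self_mem_range_succ n)]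
    · simp
    · intro j hj hjn
      have : n - j ≠ 0 := by
        have := Finset.mem_range_succ_iff.mp hj
        omega
      simp [zero_pow this]
  rw [h0]
  simp
  ring

lemma negpow1 (k : ℕ) : ((-1:ℝ))^k * ((-1:ℝ))^(k+1) = -1 := by
  rw [← pow_add]; exact Odd.neg_one_pow ⟨k, by ring⟩

lemma negpow2 (k : ℕ) : ((-1:ℝ))^k * ((-1:ℝ))^k = 1 := by
  rw [← pow_add]; exact Even.neg_one_pow ⟨k, by ring⟩

/-- The density of `J = μX + νY`, where `X ~ Exponential(1)` and `Y ~ Gamma(M-1,1)` are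
independent, is the convolution of the density `s ↦ e^{-s/μ}/μ` of `μX` with the density
`t ↦ t^{M-2} e^{-t/ν}/(ν^{M-1}(M-2)!)` of `νY`; the theorem evaluates it in closed form. -/
theorem stmt7 (M : ℕ) (hM : 2 ≤ M) (μ ν : ℝ) (hμ : 0 < μ) (hν : 0 < ν) (hne : μ ≠ ν)
    (x : ℝ) (hx : 0 < x) :
    ∫ t in Set.Ioo (0:ℝ) x,
        (Real.exp (-(x - t) / μ) / μ) *
          (t ^ (M - 2) * Real.exp (-t / ν) / (ν ^ (M - 1) * ((M - 2).factorial : ℝ))) =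
      (-1 : ℝ) ^ (M - 1) * μ ^ (M - 2) / (ν - μ) ^ (M - 1) * Real.exp (-x / μ)
        + ∑ p ∈ Finset.Icc 1 (M - 1),
            (-μ) ^ (p - 1) / (((M - 1 - p).factorial : ℝ) * (ν - μ) ^ p * ν ^ (M - 1 - p)) *
              x ^ (M - 1 - p) * Real.exp (-x / ν) := by
  obtain ⟨n, rfl⟩ : ∃ n, M = n + 2 := ⟨M - 2, by omega⟩
  have hμ0 : μ ≠ 0 := ne_of_gt hμ
  have hν0 : ν ≠ 0 := ne_of_gt hν
  have hμν : μ - ν ≠ 0 := sub_ne_zero.mpr hne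
  have hfac : ∀ k : ℕ, ((k.factorial : ℝ)) ≠ 0 := fun k =>
    Nat.cast_ne_zero.mpr k.factorial_ne_zero
  set a : ℝ := (μ - ν)/(μ*ν) with ha_def
  have ha : a ≠ 0 := div_ne_zero hμν (by positivity)
  have hM2 : n + 2 - 2 = n := by omega
  have hM1 : n + 2 - 1 = n + 1 := by omega
  rw [hM2, hM1]
  have hexp1 : ∀ t : ℝ, Real.exp (-(x - t)/μ) = Real.exp (-x/μ) * Real.exp (t/μ) := by
    intro t; rw [← Real.exp_add]; congr 1; field_simp; ring
  have hexp2 : ∀ t : ℝ, Real.exp (-(a*t)) = Real.exp (t/μ) * Real.exp (-t/ν) := by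
    intro t; rw [← Real.exp_add]; congr 1; rw [ha_def]; field_simp; ring
  have hint : (∫ t in Set.Ioo (0:ℝ) x, (Real.exp (-(x - t) / μ) / μ) *
        (t ^ n * Real.exp (-t / ν) / (ν ^ (n+1) * (n.factorial : ℝ))))
      = (Real.exp (-x/μ)/(μ * ν^(n+1) * (n.factorial:ℝ))) *
          ∫ t in (0:ℝ)..x, t^n * Real.exp (-(a*t)) := by
    rw [← MeasureTheory.integral_Ioc_eq_integral_Ioo, ← intervalIntegral.integral_of_le hx.le,
      ← intervalIntegral.integral_const_mul]
    apply intervalIntegral.integral_congr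
    intro t _
    dsimp only
    rw [hexp1 t, hexp2 t]
    ring
  rw [hint, int_eq a ha n x]
  rw [show Finset.Icc 1 (n+1) = Finset.Ico 1 (n+2) from (Finset.Ico_add_one_right_eq_Icc 1 (n+1)).symm,
    Finset.sum_Ico_eq_sum_range, show n + 2 - 1 = n + 1 from rfl]
  have hexp3 : Real.exp (-x/μ) * Real.exp (-(a*x)) = Real.exp (-x/ν) := by
    rw [← Real.exp_add]; congr 1; rw [ha_def]; field_simp; ring
  have hapow : ∀ k : ℕ, a ^ k = (μ-ν)^k / (μ*ν)^k := fun k => div_pow _ _ k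
  rw [mul_sub, sub_eq_add_neg, Finset.mul_sum, Finset.mul_sum, ← Finset.sum_neg_distrib]
  congr 1
  · -- first term
    rw [hapow (n+1), show ((ν - μ):ℝ) = -(μ - ν) by ring]
    have hp : (μ - ν)^(n+1) ≠ 0 := pow_ne_zero _ hμν
    rcases Nat.even_or_odd (n+1) with h | h
    · rw [h.neg_one_pow, h.neg_pow]
      field_simp
      ring
    · rw [h.neg_one_pow, h.neg_pow]
      field_simp
      ring
  · apply Finset.sum_congr rfl
    intro j hj
    have hjn : j ≤ n := by
      have := Finset.mem_range.mp hj; omega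
    have e1 : 1 + j - 1 = j := by omega
    have e2 : n + 1 - (1 + j) = n - j := by omega
    rw [e1, e2, hapow (j+1), show ((ν - μ):ℝ) = -(μ - ν) by ring, ← hexp3]
    have hp : (μ - ν)^(j+1) ≠ 0 := pow_ne_zero _ hμν
    rcases Nat.even_or_odd j with h | h
    · have h1 : Odd (1+j) := by simpa [add_comm] using h.add_one
      rw [h.neg_pow, h1.neg_pow]
      field_simp
      rw [show (ν:ℝ)^(n+1) = ν^(j+1) * ν^(n-j) by rw [← pow_add]; congr 1; omega]
      ring
    · have h1 : Even (1+j) := by simpa [add_comm] using h.add_one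
      rw [h.neg_pow, h1.neg_pow]
      field_simp
      rw [show (ν:ℝ)^(n+1) = ν^(j+1) * ν^(n-j) by rw [← pow_add]; congr 1; omega]
      ring
end

section
/- Let X ~ Exponential(1) and Y ~ Gamma(M−1, 1) be independent with M ≥ 2, and μ, ν > 0 with μ ≠ ν. Then E[log₂(1 + μX + νY)] = log₂(e)·[ ((-μ)^{M-1}/(ν−μ)^{M-1}) e^{1/μ} E₁(1/μ) + ∑_{p=1}^{M-1} ((-μ)^{p-1} ν/(ν−μ)^p) e^{1/ν} ∑_{q=1}^{M-p} E_q(1/ν) ]. -/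
open Real MeasureTheory Set

/- ### Auxiliary lemmas -/

lemma pow_exp_integrable {r : ℝ} (hr : 0 < r) (n : ℕ) :
    IntegrableOn (fun y : ℝ => y ^ n * Real.exp (-(r * y))) (Ioi 0) := by
  have h1 : IntegrableOn (fun y : ℝ => y ^ n * Real.exp (-y)) (Ioi 0) := by
    have := Real.GammaIntegral_convergent (s := n + 1) (by positivity)
    refine (this.congr_fun (fun x hx => ?_) measurableSet_Ioi)
    simp only [add_sub_cancel_right]
    rw [Real.rpow_natCast]
    ring
  have h2 : IntegrableOn (fun y : ℝ => (r * y) ^ n * Real.exp (-(r * y))) (Ioi 0) := by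
    have := (integrableOn_Ioi_comp_mul_left_iff (fun y => y ^ n * Real.exp (-y)) 0 hr).mpr
      (by rwa [mul_zero])
    simpa using this
  have h3 : IntegrableOn (fun y : ℝ => ((r:ℝ) ^ n)⁻¹ * ((r * y) ^ n * Real.exp (-(r * y)))) (Ioi 0) :=
    h2.const_mul _
  refine IntegrableOn.congr_fun h3 (fun x hx => ?_) measurableSet_Ioi
  field_simp [mul_pow]
  ring

lemma laplace_pow {r : ℝ} (hr : 0 < r) (n : ℕ) :
    ∫ y in Ioi (0:ℝ), y ^ n * Real.exp (-(r * y)) = n.factorial / r ^ (n + 1) := by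
  have := Real.integral_rpow_mul_exp_neg_mul_Ioi (a := n + 1) (r := r) (by positivity) hr
  rw [show ((n:ℝ) + 1 - 1) = (n:ℝ) by ring] at this
  rw [show ∫ y in Ioi (0:ℝ), y ^ n * Real.exp (-(r * y))
      = ∫ t in Ioi (0:ℝ), t ^ ((n:ℝ)) * Real.exp (-(r * t)) by
    refine setIntegral_congr_fun measurableSet_Ioi (fun x hx => ?_)
    rw [Real.rpow_natCast], this]
  rw [show ((n:ℝ) + 1) = ((n + 1 : ℕ) : ℝ) by push_cast; ring, Real.rpow_natCast]
  rw [show ((n + 1 : ℕ) : ℝ) = ((n:ℝ) + 1) by push_cast; ring, Real.Gamma_nat_eq_factorial]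
  rw [div_pow, one_pow]
  field_simp

lemma inv_pow_exp_integrable {c : ℝ} (hc : 0 < c) (q : ℕ) :
    IntegrableOn (fun t : ℝ => Real.exp (-t) / (1 + c * t) ^ q) (Ioi 0) := by
  refine Integrable.mono' (exp_neg_integrableOn_Ioi 0 one_pos) ?_ ?_
  · apply Measurable.aestronglyMeasurable
    exact (measurable_exp.comp measurable_neg).div ((measurable_const.add
      (measurable_const.mul measurable_id)).pow_const q)
  · filter_upwards [self_mem_ae_restrict measurableSet_Ioi] with t ht
    have ht' : (0:ℝ) < t := mem_Ioi.mp ht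
    have h1 : (1:ℝ) ≤ (1 + c * t) ^ q := one_le_pow₀ (by nlinarith)
    rw [Real.norm_eq_abs, abs_div, abs_of_nonneg (Real.exp_pos _).le,
      abs_of_nonneg (by positivity), show (-1:ℝ) * t = -t by ring]
    exact div_le_self (Real.exp_pos _).le h1

lemma genExpInt_eq {c : ℝ} (hc : 0 < c) (q : ℕ) :
    ∫ t in Ioi (0:ℝ), c * Real.exp (-t) / (1 + c * t) ^ q
      = Real.exp (1 / c) * genExpInt q (1 / c) := by
  have emb : MeasurableEmbedding (fun s : ℝ => 1 + s) :=
    (Homeomorph.addLeft (1:ℝ)).measurableEmbedding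
  have mp : MeasurePreserving (fun s : ℝ => 1 + s) volume volume :=
    measurePreserving_add_left volume 1
  have h1 : genExpInt q (1 / c) = ∫ s in Ioi (0:ℝ), Real.exp (-(1/c) * (1 + s)) / (1 + s) ^ q := by
    rw [genExpInt]
    rw [show Ioi (1:ℝ) = (fun s : ℝ => 1 + s) '' (Ioi 0) by
      ext u
      constructor
      · intro h; exact ⟨u - 1, by simpa using by linarith [mem_Ioi.mp h], by ring⟩
      · rintro ⟨v, hv, rfl⟩; simpa using by linarith [mem_Ioi.mp hv]]
    rw [mp.setIntegral_image_emb emb]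
  have h2 : ∫ s in Ioi (0:ℝ), Real.exp (-(1/c) * (1 + s)) / (1 + s) ^ q
      = c * ∫ t in Ioi (0:ℝ), Real.exp (-(1/c) * (1 + c * t)) / (1 + c * t) ^ q := by
    have := integral_comp_mul_left_Ioi
      (fun s => Real.exp (-(1/c) * (1 + s)) / (1 + s) ^ q) 0 hc
    rw [mul_zero] at this
    rw [this, smul_eq_mul, ← mul_assoc, mul_inv_cancel₀ hc.ne', one_mul]
  rw [h1, h2]
  rw [← integral_const_mul, ← integral_const_mul]
  refine setIntegral_congr_fun measurableSet_Ioi (fun t ht => ?_)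
  have hexp : Real.exp (-(1/c) * (1 + c * t)) = Real.exp (-(1/c)) * Real.exp (-t) := by
    rw [← Real.exp_add]; congr 1; field_simp; ring
  rw [hexp, show Real.exp (1/c) * (c * (Real.exp (-(1/c)) * Real.exp (-t) / (1 + c * t) ^ q))
      = (Real.exp (1/c) * Real.exp (-(1/c))) * (c * Real.exp (-t) / (1 + c * t) ^ q) by ring,
    ← Real.exp_add, show (1/c) + -(1/c) = (0:ℝ) by ring, Real.exp_zero, one_mul]

lemma frullani_pointwise {z t : ℝ} (hz : 0 ≤ z) (ht : 0 < t) :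
    (Real.exp (-t) - Real.exp (-t * (1 + z))) / t
      = ∫ s in Ioc (1:ℝ) (1 + z), Real.exp (-t * s) := by
  rw [← intervalIntegral.integral_of_le (by linarith : (1:ℝ) ≤ 1 + z)]
  rw [intervalIntegral.integral_comp_mul_left (fun u => Real.exp u) (neg_ne_zero.mpr ht.ne')]
  rw [integral_exp]
  rw [smul_eq_mul, inv_mul_eq_div, mul_one, div_eq_div_iff ht.ne' (neg_ne_zero.mpr ht.ne')]
  ring

lemma exp_mul_int {s : ℝ} (hs : 0 < s) :
    ∫ t in Ioi (0:ℝ), Real.exp (-t * s) = 1 / s := by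
  have h : ∫ y in Ioi (0:ℝ), y ^ 0 * Real.exp (-(s * y)) = (Nat.factorial 0) / s ^ (0 + 1) :=
    laplace_pow hs 0
  norm_num at h
  rw [one_div, ← h]
  refine setIntegral_congr_fun measurableSet_Ioi (fun t ht => ?_)
  ring_nf

lemma frullani {z : ℝ} (hz : 0 ≤ z) :
    ∫ t in Ioi (0:ℝ), (Real.exp (-t) - Real.exp (-t * (1 + z))) / t = Real.log (1 + z) := by
  have step1 : ∫ t in Ioi (0:ℝ), (Real.exp (-t) - Real.exp (-t * (1 + z))) / t
      = ∫ t in Ioi (0:ℝ), ∫ s in Ioc (1:ℝ) (1 + z), Real.exp (-t * s) :=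
    setIntegral_congr_fun measurableSet_Ioi (fun t ht => frullani_pointwise hz ht)
  have hint : Integrable (Function.uncurry fun t s => Real.exp (-t * s))
      ((volume.restrict (Ioi (0:ℝ))).prod (volume.restrict (Ioc (1:ℝ) (1 + z)))) := by
    have hg : Integrable (fun p : ℝ × ℝ => Real.exp (-p.1) * 1)
        ((volume.restrict (Ioi (0:ℝ))).prod (volume.restrict (Ioc (1:ℝ) (1 + z)))) := by
      have h1 : IntegrableOn (fun t : ℝ => Real.exp (-t)) (Ioi 0) :=
        (exp_neg_integrableOn_Ioi 0 one_pos).congr_fun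
          (fun x _ => by norm_num) measurableSet_Ioi
      have h2 : Integrable (fun _ : ℝ => (1:ℝ)) (volume.restrict (Ioc (1:ℝ) (1 + z))) :=
        integrableOn_const measure_Ioc_lt_top.ne
      exact Integrable.mul_prod (f := fun t : ℝ => Real.exp (-t)) (g := fun _ : ℝ => (1:ℝ))
        h1 h2
    refine hg.mono' ?_ ?_
    · exact ((measurable_fst.neg.mul measurable_snd).exp).aestronglyMeasurable
    · rw [Measure.prod_restrict]
      filter_upwards [self_mem_ae_restrict (measurableSet_Ioi.prod measurableSet_Ioc)]
        with p hp
      obtain ⟨hp1, hp2⟩ := hp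
      obtain ⟨t, s⟩ := p
      simp only [Function.uncurry_apply_pair]
      rw [Real.norm_eq_abs, abs_of_nonneg (Real.exp_pos _).le, mul_one]
      exact Real.exp_le_exp.mpr (by nlinarith [mem_Ioi.mp hp1, (mem_Ioc.mp hp2).1])
  have swap := integral_integral_swap (μ := volume.restrict (Ioi (0:ℝ)))
    (ν := volume.restrict (Ioc (1:ℝ) (1 + z))) hint
  rw [step1, swap]
  have step2 : ∫ s in Ioc (1:ℝ) (1 + z), ∫ t in Ioi (0:ℝ), Real.exp (-t * s)
      = ∫ s in Ioc (1:ℝ) (1 + z), s⁻¹ := by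
    refine setIntegral_congr_fun measurableSet_Ioc (fun s hs => ?_)
    rw [exp_mul_int (by linarith [(mem_Ioc.mp hs).1] : (0:ℝ) < s), one_div]
  rw [step2, ← intervalIntegral.integral_of_le (by linarith : (1:ℝ) ≤ 1 + z),
    integral_inv (by intro h; simp [Set.uIcc_of_le (by linarith : (1:ℝ) ≤ 1+z)] at h; linarith)]
  rw [div_one]

lemma partial_fractions {μ ν : ℝ} (hμ : 0 < μ) (hν : 0 < ν) (hne : μ ≠ ν)
    (n : ℕ) (hn : 1 ≤ n) {t : ℝ} (ht : 0 ≤ t) :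
    ((1 + μ * t) * (1 + ν * t) ^ n)⁻¹
      = (-μ) ^ n / (ν - μ) ^ n * (1 + μ * t)⁻¹
        + ∑ p ∈ Finset.Icc 1 n, (-μ) ^ (p - 1) * ν / (ν - μ) ^ p * ((1 + ν * t) ^ (n + 1 - p))⁻¹ := by
  have hμt : (1:ℝ) + μ * t ≠ 0 := by positivity
  have hνt : (1:ℝ) + ν * t ≠ 0 := by positivity
  have hd : ν - μ ≠ 0 := sub_ne_zero.mpr (Ne.symm hne)
  induction n with
  | zero => omega
  | succ m ih =>
    rcases Nat.eq_or_lt_of_le hn with h1 | h1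
    · have hm : m = 0 := by omega
      subst hm
      simp only [Finset.Icc_self, Finset.sum_singleton]
      field_simp
      ring
    · have hm : 1 ≤ m := by omega
      have key := ih hm
      rw [Finset.sum_Icc_succ_top (by omega : 1 ≤ m + 1)]
      have expand : ((1 + μ * t) * (1 + ν * t) ^ (m + 1))⁻¹
          = ((1 + μ * t) * (1 + ν * t) ^ m)⁻¹ * (1 + ν * t)⁻¹ := by
        rw [pow_succ]; field_simp
      rw [expand, key, add_mul, Finset.sum_mul]
      have h2 : ∀ p ∈ Finset.Icc 1 m,
          (-μ) ^ (p - 1) * ν / (ν - μ) ^ p * ((1 + ν * t) ^ (m + 1 - p))⁻¹ * (1 + ν * t)⁻¹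
            = (-μ) ^ (p - 1) * ν / (ν - μ) ^ p * ((1 + ν * t) ^ (m + 1 + 1 - p))⁻¹ := by
        intro p hp
        obtain ⟨hp1, hp2⟩ := Finset.mem_Icc.mp hp
        rw [show m + 1 + 1 - p = (m + 1 - p) + 1 by omega, pow_succ, mul_inv]
        ring
      rw [Finset.sum_congr rfl h2]
      have h3 : (-μ) ^ m / (ν - μ) ^ m * (1 + μ * t)⁻¹ * (1 + ν * t)⁻¹
          = (-μ) ^ (m + 1) / (ν - μ) ^ (m + 1) * (1 + μ * t)⁻¹
            + (-μ) ^ (m + 1 - 1) * ν / (ν - μ) ^ (m + 1) * ((1 + ν * t) ^ (m + 1 + 1 - (m + 1)))⁻¹ := by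
        rw [show m + 1 - 1 = m from rfl, show m + 1 + 1 - (m + 1) = 1 from by omega, pow_one]
        field_simp
        ring
      rw [h3]
      ring

lemma telescope {ν : ℝ} (hν : 0 < ν) (P : ℕ) {t : ℝ} (ht : 0 ≤ t) :
    1 - ((1 + ν * t) ^ P)⁻¹ = t * ∑ q ∈ Finset.Icc 1 P, ν / (1 + ν * t) ^ q := by
  have hνt : (1:ℝ) + ν * t ≠ 0 := by positivity
  induction P with
  | zero => simp
  | succ m ih =>
    rw [Finset.sum_Icc_succ_top (by omega : 1 ≤ m + 1), mul_add, ← ih, pow_succ]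
    field_simp
    ring

lemma k_bound {z t : ℝ} (hz : 0 ≤ z) (ht : 0 < t) :
    0 ≤ (Real.exp (-t) - Real.exp (-t * (1 + z))) / t ∧
      (Real.exp (-t) - Real.exp (-t * (1 + z))) / t ≤ z * Real.exp (-t) := by
  have he : Real.exp (-t * (1 + z)) = Real.exp (-t) * Real.exp (-(t * z)) := by
    rw [← Real.exp_add]; congr 1; ring
  have h1 : Real.exp (-(t * z)) ≤ 1 := by
    have := Real.exp_le_exp.mpr (show -(t * z) ≤ 0 by nlinarith)
    rwa [Real.exp_zero] at this
  have h2 : 1 - Real.exp (-(t * z)) ≤ t * z := by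
    have := Real.add_one_le_exp (-(t * z)); linarith
  constructor
  · apply div_nonneg _ ht.le
    rw [he]; nlinarith [Real.exp_pos (-t)]
  · rw [div_le_iff₀ ht, he]
    nlinarith [Real.exp_pos (-t), mul_nonneg (Real.exp_pos (-t)).le
      (show (0:ℝ) ≤ t * z - (1 - Real.exp (-(t * z))) by linarith)]

lemma one_sub_inv_pow_le {c : ℝ} (hc : 0 ≤ c) (P : ℕ) :
    1 - ((1 + c) ^ P)⁻¹ ≤ P * c := by
  induction P with
  | zero => simp
  | succ m ih =>
    have h3 : (0:ℝ) < 1 + c := by linarith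
    have h2 : (0:ℝ) < (1 + c) ^ m := by positivity
    have iD : ((1 + c) ^ m)⁻¹ * (1 + c) ^ m = 1 := inv_mul_cancel₀ h2.ne'
    have ic : (1 + c)⁻¹ * (1 + c) = 1 := inv_mul_cancel₀ h3.ne'
    have hle1 : (1 + c)⁻¹ ≤ 1 := by nlinarith [inv_pos.mpr h3]
    have hD1 : 1 - c ≤ (1 + c)⁻¹ := by nlinarith [inv_pos.mpr h3]
    have hDle : ((1 + c) ^ m)⁻¹ ≤ 1 := by
      nlinarith [inv_pos.mpr h2, one_le_pow₀ (show (1:ℝ) ≤ 1 + c by linarith) (n := m)]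
    rw [pow_succ, mul_inv]
    push_cast
    nlinarith [mul_le_mul_of_nonneg_left hD1 (inv_pos.mpr h2).le,
      mul_le_mul_of_nonneg_right hDle hc]

lemma G1_bounds {μ ν : ℝ} (hμ : 0 < μ) (hν : 0 < ν) (n : ℕ) {x t : ℝ} (hx : 0 < x) (ht : 0 < t) :
    0 ≤ Real.exp (-t) / t - Real.exp (-t * (1 + μ * x)) / (t * (1 + ν * t) ^ (n + 1)) ∧
      Real.exp (-t) / t - Real.exp (-t * (1 + μ * x)) / (t * (1 + ν * t) ^ (n + 1))
        ≤ (μ * x + ((n : ℝ) + 1) * ν) * Real.exp (-t) := by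
  have hD0 : (0:ℝ) < (1 + ν * t) ^ (n + 1) := by positivity
  have hD1 : (1:ℝ) ≤ (1 + ν * t) ^ (n + 1) := one_le_pow₀ (by nlinarith)
  have ha : Real.exp (-t * (1 + μ * x)) = Real.exp (-t) * Real.exp (-(t * (μ * x))) := by
    rw [← Real.exp_add]; congr 1; ring
  have ha1 : Real.exp (-(t * (μ * x))) ≤ 1 := by
    have := Real.exp_le_exp.mpr (show -(t * (μ * x)) ≤ 0 by nlinarith [mul_pos ht (mul_pos hμ hx)])
    rwa [Real.exp_zero] at this
  have ha0 : 0 < Real.exp (-(t * (μ * x))) := Real.exp_pos _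
  have h1a : 1 - Real.exp (-(t * (μ * x))) ≤ t * (μ * x) := by
    have := Real.add_one_le_exp (-(t * (μ * x))); linarith
  have hDi : 1 - (((1 + ν * t) ^ (n + 1)))⁻¹ ≤ ((n : ℝ) + 1) * (ν * t) := by
    have := one_sub_inv_pow_le (mul_nonneg hν.le ht.le) (n + 1)
    push_cast at this; linarith
  have heq : Real.exp (-t) / t - Real.exp (-t * (1 + μ * x)) / (t * (1 + ν * t) ^ (n + 1))
      = Real.exp (-t) / t *
        (1 - Real.exp (-(t * (μ * x))) * (((1 + ν * t) ^ (n + 1)))⁻¹) := by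
    rw [ha]; field_simp
  have hab : Real.exp (-(t * (μ * x))) * (((1 + ν * t) ^ (n + 1)))⁻¹ ≤ 1 := by
    nlinarith [inv_pos.mpr hD0, inv_le_one_of_one_le₀ hD1]
  constructor
  · rw [heq]; apply mul_nonneg (by positivity); linarith
  · rw [heq]
    have key : 1 - Real.exp (-(t * (μ * x))) * (((1 + ν * t) ^ (n + 1)))⁻¹
        ≤ t * (μ * x + ((n : ℝ) + 1) * ν) := by
      have hinv1 : (((1 + ν * t) ^ (n + 1)))⁻¹ ≤ 1 := inv_le_one_of_one_le₀ hD1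
      nlinarith [mul_nonneg (show (0:ℝ) ≤ 1 - Real.exp (-(t * (μ * x))) by linarith)
        (show (0:ℝ) ≤ 1 - (((1 + ν * t) ^ (n + 1)))⁻¹ by linarith)]
    calc Real.exp (-t) / t * (1 - Real.exp (-(t * (μ * x))) * (((1 + ν * t) ^ (n + 1)))⁻¹)
        ≤ Real.exp (-t) / t * (t * (μ * x + ((n : ℝ) + 1) * ν)) := by
          apply mul_le_mul_of_nonneg_left key (by positivity)
      _ = (μ * x + ((n : ℝ) + 1) * ν) * Real.exp (-t) := by field_simp

lemma poly_exp_integrable (a b : ℝ) (n : ℕ) :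
    IntegrableOn (fun y : ℝ => (a + b * y) * (y ^ n * Real.exp (-y) / (n.factorial : ℝ))) (Ioi 0) := by
  have hfac : ((n.factorial : ℝ)) ≠ 0 := Nat.cast_ne_zero.mpr n.factorial_ne_zero
  have h1 := (pow_exp_integrable one_pos n).const_mul (a / (n.factorial : ℝ))
  have h2 := (pow_exp_integrable one_pos (n+1)).const_mul (b / (n.factorial : ℝ))
  refine IntegrableOn.congr_fun (h1.add h2) (fun y _ => ?_) measurableSet_Ioi
  simp only [one_mul, Pi.add_apply]
  field_simp
  ring

lemma lin_exp_integrable (a b : ℝ) :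
    IntegrableOn (fun x : ℝ => (a * x + b) * Real.exp (-x)) (Ioi 0) := by
  have h1 := (pow_exp_integrable one_pos 1).const_mul a
  have h2 : IntegrableOn (fun x : ℝ => Real.exp (-x)) (Ioi 0) :=
    (exp_neg_integrableOn_Ioi 0 one_pos).congr_fun (fun x _ => by norm_num) measurableSet_Ioi
  refine IntegrableOn.congr_fun (h1.add (h2.const_mul b)) (fun y _ => ?_) measurableSet_Ioi
  simp only [Pi.add_apply, one_mul, pow_one]
  ring
/- ### Main theorem -/
set_option maxHeartbeats 1000000 in

/-- `E[log₂(1 + μX + νY)]` for independent `X ~ Exponential(1)` and `Y ~ Gamma(M-1,1)`,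
written as a double integral against their densities. -/
theorem stmt8 (M : ℕ) (hM : 2 ≤ M) (μ ν : ℝ) (hμ : 0 < μ) (hν : 0 < ν) (hne : μ ≠ ν) :
    (∫ x in Set.Ioi (0:ℝ), ∫ y in Set.Ioi (0:ℝ),
        Real.logb 2 (1 + μ * x + ν * y) * Real.exp (-x) *
          (y ^ (M - 2) * Real.exp (-y) / ((M - 2).factorial : ℝ))) =
      Real.logb 2 (Real.exp 1) *
        ((-μ) ^ (M - 1) / (ν - μ) ^ (M - 1) * Real.exp (1 / μ) * genExpInt 1 (1 / μ)
          + ∑ p ∈ Finset.Icc 1 (M - 1),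
              (-μ) ^ (p - 1) * ν / (ν - μ) ^ p * Real.exp (1 / ν) *
                ∑ q ∈ Finset.Icc 1 (M - p), genExpInt q (1 / ν)) := by
  obtain ⟨n, rfl⟩ : ∃ n, M = n + 2 := ⟨M - 2, by omega⟩
  have e2 : n + 2 - 2 = n := by omega
  have e1 : n + 2 - 1 = n + 1 := by omega
  simp only [e2, e1, Real.logb, Real.log_exp]
  have hfac : ((n.factorial : ℝ)) ≠ 0 := Nat.cast_ne_zero.mpr n.factorial_ne_zero
  have hd : ν - μ ≠ 0 := sub_ne_zero.mpr (Ne.symm hne)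
  have hexpint : IntegrableOn (fun x : ℝ => Real.exp (-x)) (Ioi 0) :=
    (exp_neg_integrableOn_Ioi 0 one_pos).congr_fun (fun x _ => by norm_num) measurableSet_Ioi
  have hexpintb : ∀ b : ℝ, 0 < b → IntegrableOn (fun x : ℝ => Real.exp (-(b * x))) (Ioi 0) :=
    fun b hb => (exp_neg_integrableOn_Ioi 0 hb).congr_fun (fun x _ => by simp only [neg_mul])
      measurableSet_Ioi
  have hw2int : IntegrableOn (fun y : ℝ => y ^ n * Real.exp (-y) / (n.factorial : ℝ)) (Ioi 0) :=
    IntegrableOn.congr_fun ((pow_exp_integrable one_pos n).div_const (n.factorial : ℝ))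
      (fun y _ => by norm_num) measurableSet_Ioi
  have hw2sum : ∫ y in Ioi (0:ℝ), y ^ n * Real.exp (-y) / (n.factorial : ℝ) = 1 := by
    rw [integral_div]
    rw [show ∫ y in Ioi (0:ℝ), y ^ n * Real.exp (-y)
        = ∫ y in Ioi (0:ℝ), y ^ n * Real.exp (-(1 * y)) from
      setIntegral_congr_fun measurableSet_Ioi (fun y _ => by norm_num)]
    rw [laplace_pow one_pos n, one_pow, div_one]
    exact div_self hfac
  -- pull out 1/log 2
  have lhs_eq : (∫ x in Ioi (0:ℝ), ∫ y in Ioi (0:ℝ),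
        Real.log (1 + μ * x + ν * y) / Real.log 2 * Real.exp (-x) *
          (y ^ n * Real.exp (-y) / (n.factorial : ℝ)))
      = (1 / Real.log 2) * ∫ x in Ioi (0:ℝ), ∫ y in Ioi (0:ℝ),
          Real.log (1 + μ * x + ν * y) * Real.exp (-x) *
            (y ^ n * Real.exp (-y) / (n.factorial : ℝ)) := by
    rw [← integral_const_mul]
    refine setIntegral_congr_fun measurableSet_Ioi (fun x _ => ?_)
    rw [← integral_const_mul]
    exact setIntegral_congr_fun measurableSet_Ioi (fun y _ => by ring)
  rw [lhs_eq]
  congr 1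
  -- the core identity
  -- Step 1: inner y-integral via Frullani + Fubini
  have step_inner : ∀ x ∈ Ioi (0:ℝ),
      (∫ y in Ioi (0:ℝ), Real.log (1 + μ * x + ν * y) * (y ^ n * Real.exp (-y) / (n.factorial : ℝ)))
        = ∫ t in Ioi (0:ℝ),
            (Real.exp (-t) / t - Real.exp (-t * (1 + μ * x)) / (t * (1 + ν * t) ^ (n + 1))) := by
    intro x hx
    have hx' : (0:ℝ) < x := hx
    have h1 : ∀ y ∈ Ioi (0:ℝ),
        Real.log (1 + μ * x + ν * y) * (y ^ n * Real.exp (-y) / (n.factorial : ℝ))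
          = ∫ t in Ioi (0:ℝ), ((Real.exp (-t) - Real.exp (-t * (1 + (μ * x + ν * y)))) / t) *
              (y ^ n * Real.exp (-y) / (n.factorial : ℝ)) := by
      intro y hy
      have hy' : (0:ℝ) < y := hy
      have hz : (0:ℝ) ≤ μ * x + ν * y := by nlinarith [mul_pos hμ hx', mul_pos hν hy']
      rw [integral_mul_const, frullani hz, show (1:ℝ) + (μ * x + ν * y) = 1 + μ * x + ν * y
        from by ring]
    rw [setIntegral_congr_fun measurableSet_Ioi h1]
    have hint1 : Integrable (Function.uncurry fun y t =>
        ((Real.exp (-t) - Real.exp (-t * (1 + (μ * x + ν * y)))) / t) *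
          (y ^ n * Real.exp (-y) / (n.factorial : ℝ)))
        ((volume.restrict (Ioi (0:ℝ))).prod (volume.restrict (Ioi (0:ℝ)))) := by
      have hdom : Integrable (fun p : ℝ × ℝ =>
          ((μ * x + ν * p.1) * (p.1 ^ n * Real.exp (-p.1) / (n.factorial : ℝ))) *
            Real.exp (-p.2))
          ((volume.restrict (Ioi (0:ℝ))).prod (volume.restrict (Ioi (0:ℝ)))) :=
        Integrable.mul_prod
          (f := fun y : ℝ => (μ * x + ν * y) * (y ^ n * Real.exp (-y) / (n.factorial : ℝ)))
          (g := fun t : ℝ => Real.exp (-t))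
          (poly_exp_integrable (μ * x) ν n) hexpint
      refine hdom.mono' ?_ ?_
      · apply Measurable.aestronglyMeasurable
        exact ((measurable_snd.neg.exp.sub ((measurable_snd.neg.mul
            (((measurable_fst.const_mul ν).const_add (μ * x)).const_add 1)).exp)).div
          measurable_snd).mul
          (((measurable_fst.pow_const n).mul measurable_fst.neg.exp).div_const _)
      · rw [Measure.prod_restrict]
        filter_upwards [self_mem_ae_restrict (measurableSet_Ioi.prod measurableSet_Ioi)]
          with p hp
        obtain ⟨hp1, hp2⟩ := hp
        obtain ⟨y, t⟩ := p
        simp only [Function.uncurry_apply_pair]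
        have hy' : (0:ℝ) < y := hp1
        have ht' : (0:ℝ) < t := hp2
        have hz : (0:ℝ) ≤ μ * x + ν * y := by nlinarith [mul_pos hμ hx', mul_pos hν hy']
        have hb := k_bound hz ht'
        have hw2nn : 0 ≤ y ^ n * Real.exp (-y) / (n.factorial : ℝ) := by positivity
        rw [Real.norm_eq_abs, abs_mul, abs_of_nonneg hb.1, abs_of_nonneg hw2nn]
        calc ((Real.exp (-t) - Real.exp (-t * (1 + (μ * x + ν * y)))) / t) *
              (y ^ n * Real.exp (-y) / (n.factorial : ℝ))
            ≤ ((μ * x + ν * y) * Real.exp (-t)) * (y ^ n * Real.exp (-y) / (n.factorial : ℝ)) :=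
              mul_le_mul_of_nonneg_right hb.2 hw2nn
          _ = ((μ * x + ν * y) * (y ^ n * Real.exp (-y) / (n.factorial : ℝ))) * Real.exp (-t) := by
              ring
    have swap1 := integral_integral_swap (μ := volume.restrict (Ioi (0:ℝ)))
      (ν := volume.restrict (Ioi (0:ℝ))) hint1
    rw [swap1]
    refine setIntegral_congr_fun measurableSet_Ioi (fun t ht => ?_)
    have ht' : (0:ℝ) < t := ht
    have hνt : (0:ℝ) < 1 + ν * t := by nlinarith
    have h2 : ∀ y ∈ Ioi (0:ℝ),
        ((Real.exp (-t) - Real.exp (-t * (1 + (μ * x + ν * y)))) / t) *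
            (y ^ n * Real.exp (-y) / (n.factorial : ℝ))
          = (Real.exp (-t) / t) * (y ^ n * Real.exp (-y) / (n.factorial : ℝ)) -
              (Real.exp (-t * (1 + μ * x)) / (t * (n.factorial : ℝ))) *
                (y ^ n * Real.exp (-((1 + ν * t) * y))) := by
      intro y hy
      have he : Real.exp (-t * (1 + (μ * x + ν * y))) * Real.exp (-y)
          = Real.exp (-t * (1 + μ * x)) * Real.exp (-((1 + ν * t) * y)) := by
        rw [← Real.exp_add, ← Real.exp_add]; congr 1; ring
      have ht0 : t ≠ 0 := ht'.ne'
      linear_combination (-(y ^ n) / (t * (n.factorial : ℝ))) * he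
    rw [setIntegral_congr_fun measurableSet_Ioi h2]
    rw [integral_sub (hw2int.const_mul _) ((pow_exp_integrable hνt n).const_mul _)]
    rw [integral_const_mul, integral_const_mul, hw2sum, laplace_pow hνt n]
    rw [mul_one, show Real.exp (-t * (1 + μ * x)) / (t * (n.factorial : ℝ)) *
        ((n.factorial : ℝ) / (1 + ν * t) ^ (n + 1))
      = Real.exp (-t * (1 + μ * x)) / (t * (1 + ν * t) ^ (n + 1)) from by
        field_simp]
  -- Step 2: outer Fubini
  have hint2 : Integrable (Function.uncurry fun x t => Real.exp (-x) *
      (Real.exp (-t) / t - Real.exp (-t * (1 + μ * x)) / (t * (1 + ν * t) ^ (n + 1))))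
      ((volume.restrict (Ioi (0:ℝ))).prod (volume.restrict (Ioi (0:ℝ)))) := by
    have hdom : Integrable (fun p : ℝ × ℝ =>
        ((μ * p.1 + ((n : ℝ) + 1) * ν) * Real.exp (-p.1)) * Real.exp (-p.2))
        ((volume.restrict (Ioi (0:ℝ))).prod (volume.restrict (Ioi (0:ℝ)))) :=
      Integrable.mul_prod
        (f := fun x : ℝ => (μ * x + ((n : ℝ) + 1) * ν) * Real.exp (-x))
        (g := fun t : ℝ => Real.exp (-t))
        (lin_exp_integrable μ (((n : ℝ) + 1) * ν)) hexpint
    refine hdom.mono' ?_ ?_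
    · apply Measurable.aestronglyMeasurable
      exact (measurable_fst.neg.exp).mul
        ((measurable_snd.neg.exp.div measurable_snd).sub
          (((measurable_snd.neg.mul ((measurable_fst.const_mul μ).const_add 1)).exp).div
            (measurable_snd.mul
              (((measurable_snd.const_mul ν).const_add 1).pow_const (n + 1)))))
    · rw [Measure.prod_restrict]
      filter_upwards [self_mem_ae_restrict (measurableSet_Ioi.prod measurableSet_Ioi)]
        with p hp
      obtain ⟨hp1, hp2⟩ := hp
      obtain ⟨x, t⟩ := p
      simp only [Function.uncurry_apply_pair]
      have hx' : (0:ℝ) < x := hp1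
      have ht' : (0:ℝ) < t := hp2
      have hb := G1_bounds hμ hν n hx' ht'
      rw [Real.norm_eq_abs, abs_mul, abs_of_nonneg (Real.exp_pos _).le, abs_of_nonneg hb.1]
      calc Real.exp (-x) *
            (Real.exp (-t) / t - Real.exp (-t * (1 + μ * x)) / (t * (1 + ν * t) ^ (n + 1)))
          ≤ Real.exp (-x) * ((μ * x + ((n : ℝ) + 1) * ν) * Real.exp (-t)) :=
            mul_le_mul_of_nonneg_left hb.2 (Real.exp_pos _).le
        _ = ((μ * x + ((n : ℝ) + 1) * ν) * Real.exp (-x)) * Real.exp (-t) := by ring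
  have swap2 := integral_integral_swap (μ := volume.restrict (Ioi (0:ℝ)))
    (ν := volume.restrict (Ioi (0:ℝ))) hint2
  -- Step 3: evaluate inner x-integral
  have step3 : ∀ t ∈ Ioi (0:ℝ),
      (∫ x in Ioi (0:ℝ), Real.exp (-x) *
          (Real.exp (-t) / t - Real.exp (-t * (1 + μ * x)) / (t * (1 + ν * t) ^ (n + 1))))
        = Real.exp (-t) / t - Real.exp (-t) / t * ((1 + μ * t) * (1 + ν * t) ^ (n + 1))⁻¹ := by
    intro t ht
    have ht' : (0:ℝ) < t := ht
    have hμt : (0:ℝ) < 1 + μ * t := by nlinarith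
    have hνt : (0:ℝ) < 1 + ν * t := by nlinarith
    have h3 : ∀ x ∈ Ioi (0:ℝ), Real.exp (-x) *
        (Real.exp (-t) / t - Real.exp (-t * (1 + μ * x)) / (t * (1 + ν * t) ^ (n + 1)))
          = (Real.exp (-t) / t) * Real.exp (-x) -
              (Real.exp (-t) / (t * (1 + ν * t) ^ (n + 1))) * Real.exp (-((1 + μ * t) * x)) := by
      intro x hx
      have he : Real.exp (-x) * Real.exp (-t * (1 + μ * x))
          = Real.exp (-t) * Real.exp (-((1 + μ * t) * x)) := by
        rw [← Real.exp_add, ← Real.exp_add]; congr 1; ring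
      linear_combination (-1 / (t * (1 + ν * t) ^ (n + 1))) * he
    rw [setIntegral_congr_fun measurableSet_Ioi h3]
    rw [integral_sub (hexpint.const_mul _) ((hexpintb (1 + μ * t) hμt).const_mul _)]
    rw [integral_const_mul, integral_const_mul, integral_exp_neg_Ioi_zero, mul_one]
    have h4 : ∫ x in Ioi (0:ℝ), Real.exp (-((1 + μ * t) * x)) = 1 / (1 + μ * t) := by
      rw [← exp_mul_int hμt]
      exact setIntegral_congr_fun measurableSet_Ioi (fun x _ => by ring_nf)
    rw [h4]
    have h5 : Real.exp (-t) / (t * (1 + ν * t) ^ (n + 1)) * (1 / (1 + μ * t))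
        = Real.exp (-t) / t * ((1 + μ * t) * (1 + ν * t) ^ (n + 1))⁻¹ := by
      field_simp
    rw [h5]
  -- Step 4: partial fractions pointwise
  have step4 : ∀ t ∈ Ioi (0:ℝ),
      Real.exp (-t) / t - Real.exp (-t) / t * ((1 + μ * t) * (1 + ν * t) ^ (n + 1))⁻¹
        = (-μ) ^ (n + 1) / (ν - μ) ^ (n + 1) * (μ * Real.exp (-t) / (1 + μ * t))
          + ∑ p ∈ Finset.Icc 1 (n + 1), (-μ) ^ (p - 1) * ν / (ν - μ) ^ p *
              ∑ q ∈ Finset.Icc 1 (n + 2 - p), ν * Real.exp (-t) / (1 + ν * t) ^ q := by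
    intro t ht
    have ht' : (0:ℝ) < t := ht
    have hμt : (0:ℝ) < 1 + μ * t := by nlinarith
    have hνt : (0:ℝ) < 1 + ν * t := by nlinarith
    have pf := partial_fractions hμ hν hne (n + 1) (by omega) ht'.le
    have pf' : ((1 + μ * t) * (1 + ν * t) ^ (n + 1))⁻¹
        = (-μ) ^ (n + 1) / (ν - μ) ^ (n + 1) * (1 + μ * t)⁻¹
          + ∑ p ∈ Finset.Icc 1 (n + 1), (-μ) ^ (p - 1) * ν / (ν - μ) ^ p *
              ((1 + ν * t) ^ (n + 2 - p))⁻¹ := by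
      rw [pf]
    have pf0 := partial_fractions hμ hν hne (n + 1) (by omega) (le_refl (0:ℝ))
    simp only [mul_zero, add_zero, one_pow, one_mul, mul_one, inv_one] at pf0
    have htelμ : 1 - (1 + μ * t)⁻¹ = t * (μ / (1 + μ * t)) := by
      have h := telescope hμ 1 ht'.le
      simpa using h
    have key : (1:ℝ) - ((1 + μ * t) * (1 + ν * t) ^ (n + 1))⁻¹
        = (-μ) ^ (n + 1) / (ν - μ) ^ (n + 1) * (t * (μ / (1 + μ * t)))
          + ∑ p ∈ Finset.Icc 1 (n + 1), (-μ) ^ (p - 1) * ν / (ν - μ) ^ p *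
              (t * ∑ q ∈ Finset.Icc 1 (n + 2 - p), ν / (1 + ν * t) ^ q) := by
      have h5 : ∀ p ∈ Finset.Icc 1 (n + 1),
          (-μ) ^ (p - 1) * ν / (ν - μ) ^ p *
              (t * ∑ q ∈ Finset.Icc 1 (n + 2 - p), ν / (1 + ν * t) ^ q)
            = (-μ) ^ (p - 1) * ν / (ν - μ) ^ p
              - (-μ) ^ (p - 1) * ν / (ν - μ) ^ p * ((1 + ν * t) ^ (n + 2 - p))⁻¹ := by
        intro p hp
        rw [← telescope hν (n + 2 - p) ht'.le]
        ring
      rw [Finset.sum_congr rfl h5, Finset.sum_sub_distrib]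
      rw [show (-μ) ^ (n + 1) / (ν - μ) ^ (n + 1) * (t * (μ / (1 + μ * t)))
          = (-μ) ^ (n + 1) / (ν - μ) ^ (n + 1)
            - (-μ) ^ (n + 1) / (ν - μ) ^ (n + 1) * (1 + μ * t)⁻¹ from by
        rw [← htelμ]; ring]
      linear_combination pf0 - pf'
    rw [show Real.exp (-t) / t - Real.exp (-t) / t * ((1 + μ * t) * (1 + ν * t) ^ (n + 1))⁻¹
        = Real.exp (-t) / t * (1 - ((1 + μ * t) * (1 + ν * t) ^ (n + 1))⁻¹) from by ring,
      key, mul_add]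
    congr 1
    · field_simp
    · rw [Finset.mul_sum]
      refine Finset.sum_congr rfl (fun p hp => ?_)
      rw [show Real.exp (-t) / t * ((-μ) ^ (p - 1) * ν / (ν - μ) ^ p *
          (t * ∑ q ∈ Finset.Icc 1 (n + 2 - p), ν / (1 + ν * t) ^ q))
        = (-μ) ^ (p - 1) * ν / (ν - μ) ^ p *
            (Real.exp (-t) * ∑ q ∈ Finset.Icc 1 (n + 2 - p), ν / (1 + ν * t) ^ q) from by
          field_simp]
      congr 1
      rw [Finset.mul_sum]
      exact Finset.sum_congr rfl (fun q _ => by ring)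
  -- Step 5: integrate the decomposition
  have hIntq : ∀ q : ℕ, IntegrableOn (fun t : ℝ => ν * Real.exp (-t) / (1 + ν * t) ^ q) (Ioi 0) :=
    fun q => IntegrableOn.congr_fun ((inv_pow_exp_integrable hν q).const_mul ν)
      (fun t _ => by ring) measurableSet_Ioi
  have hIntμ1 : IntegrableOn (fun t : ℝ => μ * Real.exp (-t) / (1 + μ * t)) (Ioi 0) :=
    IntegrableOn.congr_fun ((inv_pow_exp_integrable hμ 1).const_mul μ)
      (fun t _ => by rw [pow_one]; ring) measurableSet_Ioi
  have hIntp : ∀ p : ℕ, IntegrableOn (fun t : ℝ => (-μ) ^ (p - 1) * ν / (ν - μ) ^ p *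
      ∑ q ∈ Finset.Icc 1 (n + 2 - p), ν * Real.exp (-t) / (1 + ν * t) ^ q) (Ioi 0) :=
    fun p => (integrable_finset_sum _ (fun q _ => hIntq q)).const_mul _
  have hEμ : ∫ t in Ioi (0:ℝ), μ * Real.exp (-t) / (1 + μ * t)
      = Real.exp (1 / μ) * genExpInt 1 (1 / μ) := by
    rw [← genExpInt_eq hμ 1]
    exact setIntegral_congr_fun measurableSet_Ioi (fun t _ => by rw [pow_one])
  -- assemble
  calc (∫ x in Ioi (0:ℝ), ∫ y in Ioi (0:ℝ),
        Real.log (1 + μ * x + ν * y) * Real.exp (-x) *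
          (y ^ n * Real.exp (-y) / (n.factorial : ℝ)))
      = ∫ x in Ioi (0:ℝ), ∫ t in Ioi (0:ℝ), Real.exp (-x) *
          (Real.exp (-t) / t - Real.exp (-t * (1 + μ * x)) / (t * (1 + ν * t) ^ (n + 1))) := by
        refine setIntegral_congr_fun measurableSet_Ioi (fun x hx => ?_)
        rw [integral_const_mul, ← step_inner x hx, ← integral_const_mul]
        exact setIntegral_congr_fun measurableSet_Ioi (fun y _ => by ring)
    _ = ∫ t in Ioi (0:ℝ), ∫ x in Ioi (0:ℝ), Real.exp (-x) *
          (Real.exp (-t) / t - Real.exp (-t * (1 + μ * x)) / (t * (1 + ν * t) ^ (n + 1))) := swap2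
    _ = ∫ t in Ioi (0:ℝ),
          ((-μ) ^ (n + 1) / (ν - μ) ^ (n + 1) * (μ * Real.exp (-t) / (1 + μ * t))
            + ∑ p ∈ Finset.Icc 1 (n + 1), (-μ) ^ (p - 1) * ν / (ν - μ) ^ p *
                ∑ q ∈ Finset.Icc 1 (n + 2 - p), ν * Real.exp (-t) / (1 + ν * t) ^ q) := by
        refine setIntegral_congr_fun measurableSet_Ioi (fun t ht => ?_)
        rw [step3 t ht, step4 t ht]
    _ = (-μ) ^ (n + 1) / (ν - μ) ^ (n + 1) * Real.exp (1 / μ) * genExpInt 1 (1 / μ)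
          + ∑ p ∈ Finset.Icc 1 (n + 1), (-μ) ^ (p - 1) * ν / (ν - μ) ^ p * Real.exp (1 / ν) *
              ∑ q ∈ Finset.Icc 1 (n + 2 - p), genExpInt q (1 / ν) := by
        rw [integral_add (hIntμ1.const_mul _) (integrable_finset_sum _ (fun p _ => hIntp p))]
        rw [integral_const_mul, hEμ, integral_finset_sum _ (fun p _ => hIntp p)]
        congr 1
        · ring
        · refine Finset.sum_congr rfl (fun p hp => ?_)
          rw [integral_const_mul, integral_finset_sum _ (fun q _ => hIntq q)]
          rw [Finset.sum_congr rfl (fun q _ => genExpInt_eq hν q), ← Finset.mul_sum]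
          ring
end

section
/- Let Y ~ Gamma(M−1, 1) with M ≥ 2 and c > 0. Then E[log₂(1 + cY)] = log₂(e)·e^{1/c}·∑_{q=1}^{M-1} E_q(1/c), where E_q is the generalized exponential integral. -/
open Real MeasureTheory Set Filter Topology

namespace Stmt9Aux

variable {c : ℝ}

lemma one_add_pos (hc : 0 < c) {y : ℝ} (hy : 0 ≤ y) : 0 < 1 + c * y := by nlinarith

lemma int_pow_exp (k : ℕ) : ∫ y in Ioi (0:ℝ), y ^ k * Real.exp (-y) = k.factorial := by
  have h := Real.Gamma_eq_integral (s := (k:ℝ) + 1) (by positivity)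
  rw [Real.Gamma_nat_eq_factorial] at h
  rw [h]
  refine setIntegral_congr_fun measurableSet_Ioi (fun x hx => ?_)
  rw [add_sub_cancel_right, Real.rpow_natCast]; ring

lemma integrableOn_pow_exp (k : ℕ) :
    IntegrableOn (fun y => y ^ k * Real.exp (-y)) (Ioi (0:ℝ)) := by
  have h := Real.GammaIntegral_convergent (s := (k:ℝ) + 1) (by positivity)
  refine h.congr_fun (fun x hx => ?_) measurableSet_Ioi
  rw [add_sub_cancel_right]; simp only [Real.rpow_natCast]; ring

lemma integrableOn_J (hc : 0 < c) (k : ℕ) :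
    IntegrableOn (fun y => y ^ k * Real.exp (-y) / (1 + c * y)) (Ioi (0:ℝ)) := by
  have hm : AEStronglyMeasurable (fun y => y ^ k * Real.exp (-y) / (1 + c * y))
      (volume.restrict (Ioi (0:ℝ))) := by
    refine ContinuousOn.aestronglyMeasurable ?_ measurableSet_Ioi
    refine ContinuousOn.div (by fun_prop) (by fun_prop) (fun y hy => ?_)
    exact (one_add_pos hc (le_of_lt (mem_Ioi.mp hy))).ne'
  refine Integrable.mono (integrableOn_pow_exp k) hm ?_
  rw [ae_restrict_iff' measurableSet_Ioi]
  filter_upwards with y hy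
  have h0 : (0:ℝ) < y := hy
  have h1 : (1:ℝ) ≤ 1 + c * y := by nlinarith
  have hfnn : 0 ≤ y ^ k * Real.exp (-y) := by positivity
  rw [Real.norm_eq_abs, Real.norm_eq_abs, abs_of_nonneg (by positivity), abs_of_nonneg hfnn]
  exact div_le_self hfnn h1

lemma integrableOn_B (hc : 0 < c) (q : ℕ) :
    IntegrableOn (fun y => Real.exp (-y) / (1 + c * y) ^ q) (Ioi (0:ℝ)) := by
  have hm : AEStronglyMeasurable (fun y => Real.exp (-y) / (1 + c * y) ^ q)
      (volume.restrict (Ioi (0:ℝ))) := by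
    refine ContinuousOn.aestronglyMeasurable ?_ measurableSet_Ioi
    refine ContinuousOn.div (by fun_prop) (by fun_prop) (fun y hy => ?_)
    exact pow_ne_zero _ (one_add_pos hc (le_of_lt (mem_Ioi.mp hy))).ne'
  have hexp : IntegrableOn (fun y : ℝ => Real.exp (-y)) (Ioi (0:ℝ)) := by
    have := exp_neg_integrableOn_Ioi (0:ℝ) (b := 1) one_pos
    simpa using this
  refine Integrable.mono hexp hm ?_
  rw [ae_restrict_iff' measurableSet_Ioi]
  filter_upwards with y hy
  have h0 : (0:ℝ) < y := hy
  have h1 : (1:ℝ) ≤ (1 + c * y) ^ q := one_le_pow₀ (by nlinarith)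
  rw [Real.norm_eq_abs, Real.norm_eq_abs, abs_of_nonneg (by positivity),
    abs_of_nonneg (Real.exp_nonneg _)]
  exact div_le_self (Real.exp_nonneg _) h1

lemma integrableOn_L (hc : 0 < c) (m : ℕ) :
    IntegrableOn (fun y => Real.log (1 + c * y) * (y ^ m * Real.exp (-y))) (Ioi (0:ℝ)) := by
  have hm : AEStronglyMeasurable (fun y => Real.log (1 + c * y) * (y ^ m * Real.exp (-y)))
      (volume.restrict (Ioi (0:ℝ))) := by
    refine ContinuousOn.aestronglyMeasurable ?_ measurableSet_Ioi
    refine ContinuousOn.mul (ContinuousOn.log (by fun_prop) (fun y hy => ?_)) (by fun_prop)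
    exact (one_add_pos hc (le_of_lt (mem_Ioi.mp hy))).ne'
  refine Integrable.mono ((integrableOn_pow_exp (m+1)).const_mul c) hm ?_
  rw [ae_restrict_iff' measurableSet_Ioi]
  filter_upwards with y hy
  have h0 : (0:ℝ) < y := hy
  have hlog0 : 0 ≤ Real.log (1 + c * y) := Real.log_nonneg (by nlinarith)
  have hlog : Real.log (1 + c * y) ≤ c * y := by
    have := Real.log_le_sub_one_of_pos (one_add_pos hc h0.le)
    linarith
  rw [Real.norm_eq_abs, Real.norm_eq_abs, abs_of_nonneg (by positivity),
    abs_of_nonneg (by positivity)]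
  calc Real.log (1 + c * y) * (y ^ m * Real.exp (-y))
      ≤ (c * y) * (y ^ m * Real.exp (-y)) := by
        apply mul_le_mul_of_nonneg_right hlog (by positivity)
    _ = c * (y ^ (m+1) * Real.exp (-y)) := by ring

lemma J_rec (hc : 0 < c) (k : ℕ) :
    c * (∫ y in Ioi (0:ℝ), y ^ (k+1) * Real.exp (-y) / (1 + c * y))
      + (∫ y in Ioi (0:ℝ), y ^ k * Real.exp (-y) / (1 + c * y)) = k.factorial := by
  rw [← integral_const_mul, ← integral_add (((integrableOn_J hc (k+1)).const_mul c))
    (integrableOn_J hc k), ← int_pow_exp k]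
  refine setIntegral_congr_fun measurableSet_Ioi (fun y hy => ?_)
  have hu : (0:ℝ) < 1 + c * y := one_add_pos hc (le_of_lt hy)
  field_simp
  ring

lemma B_rec (hc : 0 < c) (r : ℕ) :
    (∫ y in Ioi (0:ℝ), Real.exp (-y) / (1 + c * y) ^ (r+1))
      + ((r+1 : ℝ) * c) * (∫ y in Ioi (0:ℝ), Real.exp (-y) / (1 + c * y) ^ (r+2)) = 1 := by
  set F : ℝ → ℝ := fun y => -(Real.exp (-y) / (1 + c * y) ^ (r+1)) with hF
  set f' : ℝ → ℝ := fun y => Real.exp (-y) / (1 + c * y) ^ (r+1)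
      + ((r+1 : ℝ) * c) * (Real.exp (-y) / (1 + c * y) ^ (r+2)) with hf'
  have hderiv : ∀ y ∈ Ioi (0:ℝ), HasDerivAt F (f' y) y := by
    intro y hy
    have hu : (0:ℝ) < 1 + c * y := one_add_pos hc (le_of_lt hy)
    have h1 : HasDerivAt (fun y : ℝ => Real.exp (-y)) (-Real.exp (-y)) y := by
      simpa using (hasDerivAt_neg y).exp
    have h0 : HasDerivAt (fun y : ℝ => 1 + c * y) c y := by
      simpa using ((hasDerivAt_id y).const_mul c).const_add 1
    have h2 : HasDerivAt (fun y : ℝ => (1 + c * y) ^ (r+1))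
        ((r+1 : ℕ) * (1 + c * y) ^ r * c) y := by
      simpa using h0.fun_pow (r+1)
    have h3 := (h1.div h2 (pow_ne_zero _ hu.ne')).neg
    refine h3.congr_deriv ?_
    rw [hf']
    beta_reduce
    generalize 1 + c * y = u at hu ⊢
    field_simp
    push_cast
    ring
  have hcont : ContinuousWithinAt F (Ici (0:ℝ)) 0 := by
    refine (ContinuousOn.continuousWithinAt ?_ Set.self_mem_Ici)
    refine ContinuousOn.neg (ContinuousOn.div (by fun_prop) (by fun_prop) (fun y hy => ?_))
    exact pow_ne_zero _ (one_add_pos hc (mem_Ici.mp hy)).ne'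
  have htend : Tendsto F atTop (𝓝 0) := by
    have hb : Tendsto (fun y : ℝ => Real.exp (-y) / (1 + c * y) ^ (r+1)) atTop (𝓝 0) := by
      refine squeeze_zero' ?_ ?_ Real.tendsto_exp_neg_atTop_nhds_zero
      · filter_upwards [eventually_ge_atTop (0:ℝ)] with y hy
        have := one_add_pos hc hy; positivity
      · filter_upwards [eventually_ge_atTop (0:ℝ)] with y hy
        have hu := one_add_pos hc hy
        exact div_le_self (Real.exp_nonneg _) (one_le_pow₀ (by nlinarith))
    simpa using hb.neg
  have hint : IntegrableOn f' (Ioi (0:ℝ)) :=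
    (integrableOn_B hc (r+1)).add ((integrableOn_B hc (r+2)).const_mul _)
  have key := integral_Ioi_of_hasDerivAt_of_tendsto hcont hderiv hint htend
  rw [hf'] at key
  rw [integral_add (integrableOn_B hc (r+1)) ((integrableOn_B hc (r+2)).const_mul _),
    integral_const_mul] at key
  rw [hF] at key
  simp at key
  linarith [key]

lemma L_rec (hc : 0 < c) (m : ℕ) :
    (∫ y in Ioi (0:ℝ), Real.log (1 + c * y) * (y ^ m * Real.exp (-y)))
      = (m : ℝ) * (∫ y in Ioi (0:ℝ), Real.log (1 + c * y) * (y ^ (m-1) * Real.exp (-y)))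
        + c * (∫ y in Ioi (0:ℝ), y ^ m * Real.exp (-y) / (1 + c * y)) := by
  set F : ℝ → ℝ := fun y => Real.log (1 + c * y) * (y ^ m * Real.exp (-y)) with hF
  set f' : ℝ → ℝ := fun y => c * (y ^ m * Real.exp (-y) / (1 + c * y))
      + ((m : ℝ) * (Real.log (1 + c * y) * (y ^ (m-1) * Real.exp (-y)))
        - Real.log (1 + c * y) * (y ^ m * Real.exp (-y))) with hf'
  have hderiv : ∀ y ∈ Ioi (0:ℝ), HasDerivAt F (f' y) y := by
    intro y hy
    have hu : (0:ℝ) < 1 + c * y := one_add_pos hc (le_of_lt hy)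
    have h0 : HasDerivAt (fun y : ℝ => 1 + c * y) c y := by
      simpa using ((hasDerivAt_id y).const_mul c).const_add 1
    have hlog : HasDerivAt (fun y : ℝ => Real.log (1 + c * y)) (c / (1 + c * y)) y :=
      h0.log hu.ne'
    have hexp : HasDerivAt (fun y : ℝ => Real.exp (-y)) (-Real.exp (-y)) y := by
      simpa using (hasDerivAt_neg y).exp
    have hpe := (hasDerivAt_pow m y).mul hexp
    have hFd := hlog.mul hpe
    refine hFd.congr_deriv ?_
    rw [hf', div_mul_eq_mul_div, mul_div_assoc]
    simp only [Pi.mul_apply]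
    ring
  have hcont : ContinuousWithinAt F (Ici (0:ℝ)) 0 := by
    refine ContinuousOn.continuousWithinAt ?_ Set.self_mem_Ici
    refine ContinuousOn.mul (ContinuousOn.log (by fun_prop) (fun y hy => ?_)) (by fun_prop)
    exact (one_add_pos hc (mem_Ici.mp hy)).ne'
  have htend : Tendsto F atTop (𝓝 0) := by
    refine squeeze_zero' (g := fun y => c * (y ^ (m+1) * Real.exp (-y))) ?_ ?_ ?_
    · filter_upwards [eventually_ge_atTop (0:ℝ)] with y hy
      have hu := one_add_pos hc hy
      have := Real.log_nonneg (by nlinarith : (1:ℝ) ≤ 1 + c * y)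
      positivity
    · filter_upwards [eventually_ge_atTop (0:ℝ)] with y hy
      have hu := one_add_pos hc hy
      have hlog : Real.log (1 + c * y) ≤ c * y := by
        have := Real.log_le_sub_one_of_pos hu
        linarith
      calc F y ≤ (c * y) * (y ^ m * Real.exp (-y)) :=
            mul_le_mul_of_nonneg_right hlog (by positivity)
        _ = c * (y ^ (m+1) * Real.exp (-y)) := by ring
    · have := (tendsto_pow_mul_exp_neg_atTop_nhds_zero (m+1)).const_mul c
      simpa using this
  have hint : IntegrableOn f' (Ioi (0:ℝ)) :=
    ((integrableOn_J hc m).const_mul c).add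
      (((integrableOn_L hc (m-1)).const_mul _).sub (integrableOn_L hc m))
  have key := integral_Ioi_of_hasDerivAt_of_tendsto hcont hderiv hint htend
  have h1 := (integrableOn_J hc m).const_mul c
  have h2 := (integrableOn_L hc (m-1)).const_mul (m:ℝ)
  have h3 := integrableOn_L hc m
  have h23 : Integrable (fun x => (m:ℝ) * (Real.log (1 + c * x) * (x ^ (m-1) * Real.exp (-x)))
      - Real.log (1 + c * x) * (x ^ m * Real.exp (-x))) (volume.restrict (Ioi 0)) := h2.sub h3
  rw [hf'] at key
  simp only [] at key
  rw [integral_add h1 h23, integral_sub h2 h3, integral_const_mul, integral_const_mul, hF] at key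
  simp at key
  linarith [key]

lemma subst_lem (hc : 0 < c) (q : ℕ) :
    Real.exp (1/c) * genExpInt q (1/c)
      = c * ∫ y in Ioi (0:ℝ), Real.exp (-y) / (1 + c * y) ^ q := by
  have h1 : genExpInt q (1/c)
      = ∫ s in Ioi (0:ℝ), Real.exp (-(1/c) * (s+1)) / (s+1) ^ q := by
    rw [genExpInt]
    have h := (measurePreserving_add_right volume (1:ℝ)).setIntegral_preimage_emb
      (MeasurableEquiv.addRight (1:ℝ)).measurableEmbedding
      (fun t => Real.exp (-(1/c) * t) / t ^ q) (Ioi 1)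
    simp only [preimage_add_const_Ioi, sub_self] at h
    rw [← h]
  have h2 : (∫ s in Ioi (0:ℝ), Real.exp (-(1/c) * (s+1)) / (s+1) ^ q)
      = c * ∫ y in Ioi (0:ℝ), Real.exp (-(1/c) * (c*y+1)) / (c*y+1) ^ q := by
    have h := integral_comp_mul_left_Ioi
      (fun s => Real.exp (-(1/c) * (s+1)) / (s+1) ^ q) 0 hc
    simp only [mul_zero, smul_eq_mul] at h
    rw [h]
    field_simp
  have h3 : (∫ y in Ioi (0:ℝ), Real.exp (-(1/c) * (c*y+1)) / (c*y+1) ^ q)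
      = Real.exp (-(1/c)) * ∫ y in Ioi (0:ℝ), Real.exp (-y) / (1 + c * y) ^ q := by
    rw [← integral_const_mul]
    refine setIntegral_congr_fun measurableSet_Ioi (fun y hy => ?_)
    have : -(1/c) * (c*y+1) = -y + -(1/c) := by field_simp; ring
    rw [this, Real.exp_add, add_comm (c*y) 1]
    ring
  rw [h1, h2, h3, ← mul_assoc, ← mul_assoc, mul_comm (Real.exp (1/c)) c, mul_assoc c,
    ← Real.exp_add]
  simp

lemma J_eq_B (hc : 0 < c) (k : ℕ) :
    (∫ y in Ioi (0:ℝ), y ^ k * Real.exp (-y) / (1 + c * y))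
      = k.factorial * ∫ y in Ioi (0:ℝ), Real.exp (-y) / (1 + c * y) ^ (k+1) := by
  induction k with
  | zero =>
    simp only [Nat.factorial_zero, Nat.cast_one, one_mul, pow_one]
    exact setIntegral_congr_fun measurableSet_Ioi (fun y hy => by simp)
  | succ k ih =>
    have hJ := J_rec hc k
    have hB := B_rec hc k
    have hcancel : c * (∫ y in Ioi (0:ℝ), y ^ (k+1) * Real.exp (-y) / (1 + c * y))
        = c * (((k+1 : ℝ) * k.factorial) * ∫ y in Ioi (0:ℝ),
            Real.exp (-y) / (1 + c * y) ^ (k+2)) := by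
      linear_combination hJ - ih - (k.factorial : ℝ) * hB
    have := mul_left_cancel₀ hc.ne' hcancel
    rw [this, Nat.factorial_succ]
    push_cast
    ring

lemma L_sum (hc : 0 < c) (m : ℕ) :
    (∫ y in Ioi (0:ℝ), Real.log (1 + c * y) * (y ^ m * Real.exp (-y)))
      = m.factorial * ∑ q ∈ Finset.Icc 1 (m+1),
          (c * ∫ y in Ioi (0:ℝ), Real.exp (-y) / (1 + c * y) ^ q) := by
  induction m with
  | zero =>
    rw [L_rec hc 0, J_eq_B hc 0]
    simp
  | succ m ih =>
    have hrec := L_rec hc (m+1)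
    simp only [Nat.add_sub_cancel] at hrec
    rw [hrec, ih, J_eq_B hc (m+1), Finset.sum_Icc_succ_top (by omega : 1 ≤ m+2)]
    push_cast [Nat.factorial_succ]
    ring

end Stmt9Aux

/-- `E[log₂(1 + cY)]` for `Y ~ Gamma(M-1,1)`, written as an integral against its density. -/
theorem stmt9 (M : ℕ) (hM : 2 ≤ M) (c : ℝ) (hc : 0 < c) :
    ∫ y in Set.Ioi (0:ℝ),
        Real.logb 2 (1 + c * y) * (y ^ (M - 2) * Real.exp (-y) / ((M - 2).factorial : ℝ)) =
      Real.logb 2 (Real.exp 1) * Real.exp (1 / c) *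
        ∑ q ∈ Finset.Icc 1 (M - 1), genExpInt q (1 / c) := by
  obtain ⟨m, rfl⟩ : ∃ m, M = m + 2 := ⟨M - 2, by omega⟩
  have hm2 : m + 2 - 2 = m := by omega
  have hm1 : m + 2 - 1 = m + 1 := by omega
  rw [hm2, hm1]
  have hlog2 : Real.log 2 ≠ 0 := (Real.log_pos (by norm_num)).ne'
  have hfac : ((m.factorial : ℝ)) ≠ 0 := Nat.cast_ne_zero.mpr m.factorial_ne_zero
  have hL : (∫ y in Set.Ioi (0:ℝ),
        Real.logb 2 (1 + c * y) * (y ^ m * Real.exp (-y) / (m.factorial : ℝ)))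
      = (∫ y in Set.Ioi (0:ℝ), Real.log (1 + c * y) * (y ^ m * Real.exp (-y)))
          * (Real.log 2 * (m.factorial : ℝ))⁻¹ := by
    rw [← integral_mul_const]
    refine setIntegral_congr_fun measurableSet_Ioi (fun y hy => ?_)
    rw [Real.logb]
    field_simp
  rw [hL, Stmt9Aux.L_sum hc m]
  have hsum : ∑ q ∈ Finset.Icc 1 (m+1),
      (c * ∫ y in Set.Ioi (0:ℝ), Real.exp (-y) / (1 + c * y) ^ q)
      = Real.exp (1/c) * ∑ q ∈ Finset.Icc 1 (m+1), genExpInt q (1/c) := by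
    rw [Finset.mul_sum]
    exact Finset.sum_congr rfl (fun q _ => (Stmt9Aux.subst_lem hc q).symm)
  rw [hsum, Real.logb, Real.log_exp]
  field_simp
end
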